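/- Let n ≥ 1 and let k_1,…,k_n be positive integers. Then in ℋ¹ one has z_{k_1} * z_{k_2} * ⋯ * z_{k_n} = ∑_{Π} (ш_{A ∈ Π} z_{∑_{i∈A} k_i}), where the sum runs over all partitions Π of the set {1,…,n} and the inner product is the shuffle product taken over the blocks A of Π of the single letters z_{∑_{i∈A} k_i}. -/

import Mathlib

open scoped BigOperators

/-- The product of `ℤ/pℤ` over all primes `p`. -/
abbrev PreA : Type := ∀ p : Nat.Primes, ZMod p

/-- The ideal of families that vanish for all but finitely many primes. -/
def nullIdeal : Ideal PreA where
  carrier := {f | {p | f p ≠ 0}.Finite}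
  zero_mem' := by simp
  add_mem' := by
    intro f g hf hg
    refine (hf.union hg).subset fun p hp => ?_
    by_contra hc
    simp only [Set.mem_union, Set.mem_setOf_eq, not_or, not_not] at hc
    exact hp (by simp [Set.mem_setOf_eq, hc.1, hc.2])
  smul_mem' := by
    intro c f hf
    refine hf.subset fun p hp => ?_
    simp only [Set.mem_setOf_eq] at hp ⊢
    intro h0
    exact hp (by simp [h0])

/-- The ring `𝒜 = (∏_p ℤ/pℤ)/(⊕_p ℤ/pℤ)`. -/
abbrev A : Type := PreA ⧸ nullIdeal

/-- `zetaSum p ks b` is `∑_{b > m₁ > ⋯ > m_n ≥ 1} ∏ mᵢ^{-kᵢ}` in `ℤ/pℤ`. -/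
def zetaSum (p : ℕ) : List ℕ → ℕ → ZMod p
  | [], _ => 1
  | k :: ks, b => ∑ m ∈ Finset.Ico 1 b, ((m : ZMod p)⁻¹) ^ k * zetaSum p ks m

/-- `zetaStarSum p ks b` is `∑_{b > m₁ ≥ ⋯ ≥ m_n ≥ 1} ∏ mᵢ^{-kᵢ}` in `ℤ/pℤ`. -/
def zetaStarSum (p : ℕ) : List ℕ → ℕ → ZMod p
  | [], _ => 1
  | k :: ks, b => ∑ m ∈ Finset.Ico 1 b, ((m : ZMod p)⁻¹) ^ k * zetaStarSum p ks (m + 1)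

/-- The finite multiple zeta value `ζ_𝒜(k₁,…,k_n)`. -/
def zetaA (ks : List ℕ) : A :=
  Ideal.Quotient.mk nullIdeal (fun p => zetaSum p ks p)

/-- The finite multiple zeta-star value `ζ⋆_𝒜(k₁,…,k_n)`. -/
def zetaStarA (ks : List ℕ) : A :=
  Ideal.Quotient.mk nullIdeal (fun p => zetaStarSum p ks p)

/-- `ℋ¹ = ℚ⟨z₁,z₂,…⟩`, the noncommutative polynomial algebra on variables `z_k`, `k ≥ 1`. -/
abbrev H1 : Type := MonoidAlgebra ℚ (FreeMonoid ℕ+)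

/-- The monomial (word) `z_{k₁} ⋯ z_{k_n}` in `ℋ¹`. -/
noncomputable def word (w : List ℕ+) : H1 :=
  MonoidAlgebra.of ℚ (FreeMonoid ℕ+) (FreeMonoid.ofList w)

/-- Shuffle product on words (with values in `ℋ¹`). -/
noncomputable def shuffleW : List ℕ+ → List ℕ+ → H1
  | [], w => word w
  | v, [] => word v
  | k :: v, l :: w => word [k] * shuffleW v (l :: w) + word [l] * shuffleW (k :: v) w
  termination_by v w => v.length + w.length
  decreasing_by all_goals first | (simp; omega) | simp | omega

/-- The shuffle product `ш` on `ℋ¹`, as the bilinear extension of `shuffleW`. -/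
noncomputable def shuffle (x y : H1) : H1 :=
  Finsupp.sum x.coeff fun v c => Finsupp.sum y.coeff fun w c' =>
    (c * c') • shuffleW (FreeMonoid.toList v) (FreeMonoid.toList w)

/-- Harmonic product on words (with values in `ℋ¹`). -/
noncomputable def harmW : List ℕ+ → List ℕ+ → H1
  | [], w => word w
  | v, [] => word v
  | k :: v, l :: w =>
      word [k] * harmW v (l :: w) + word [l] * harmW (k :: v) w
        + word [k + l] * harmW v w
  termination_by v w => v.length + w.length
  decreasing_by all_goals first | (simp; omega) | simp | omega

/-- The harmonic product `*` on `ℋ¹`, as the bilinear extension of `harmW`. -/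
noncomputable def harm (x y : H1) : H1 :=
  Finsupp.sum x.coeff fun v c => Finsupp.sum y.coeff fun w c' =>
    (c * c') • harmW (FreeMonoid.toList v) (FreeMonoid.toList w)

/-- Star-harmonic product on words (with values in `ℋ¹`). -/
noncomputable def harmStarW : List ℕ+ → List ℕ+ → H1
  | [], w => word w
  | v, [] => word v
  | k :: v, l :: w =>
      word [k] * harmStarW v (l :: w) + word [l] * harmStarW (k :: v) w
        - word [k + l] * harmStarW v w
  termination_by v w => v.length + w.length
  decreasing_by all_goals first | (simp; omega) | simp | omega

/-- The product `∗̄` on `ℋ¹`, as the bilinear extension of `harmStarW`. -/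
noncomputable def harmStar (x y : H1) : H1 :=
  Finsupp.sum x.coeff fun v c => Finsupp.sum y.coeff fun w c' =>
    (c * c') • harmStarW (FreeMonoid.toList v) (FreeMonoid.toList w)

/-- The image of a rational number in `𝒜`. -/
def ratA (q : ℚ) : A :=
  Ideal.Quotient.mk nullIdeal (fun p => (q.num : ZMod p) * ((q.den : ZMod p))⁻¹)

/-- The `ℚ`-linear map `Z_𝒜 : ℋ¹ → 𝒜` sending `z_{k₁} ⋯ z_{k_n}` to `ζ_𝒜(k₁,…,k_n)`. -/
noncomputable def ZA (x : H1) : A :=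
  Finsupp.sum x.coeff fun w c => ratA c * zetaA ((FreeMonoid.toList w).map (fun k => (k : ℕ)))

/-- The `ℚ`-linear map `Z̄_𝒜 : ℋ¹ → 𝒜` sending `z_{k₁} ⋯ z_{k_n}` to `ζ⋆_𝒜(k₁,…,k_n)`. -/
noncomputable def ZSA (x : H1) : A :=
  Finsupp.sum x.coeff fun w c => ratA c * zetaStarA ((FreeMonoid.toList w).map (fun k => (k : ℕ)))

/-- Sum of a list of positive integers (equal to the actual sum for nonempty lists). -/
def psum : List ℕ+ → ℕ+
  | [] => 1
  | k :: t => t.foldl (· + ·) k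

/-- The map `d` on words: `d(z_{k₁}⋯z_{k_n}) = ∑_{m} ∑_{0=i₀<⋯<i_m=n}
`z_{k_{i₀+1}+⋯+k_{i₁}} ⋯ z_{k_{i_{m-1}+1}+⋯+k_{i_m}}`. -/
noncomputable def dW (w : List ℕ+) : H1 :=
  ∑ c : Composition w.length, word ((w.splitWrtComposition c).map psum)

/-- `z_a` for a tuple `a = (a₁,…,a_m; b₁,…,b_m; c₁,…,c_n) ∈ I_{m,n}`:
`∑_{σ,τ ∈ S_m} z_{a_{σ(1)}} z_{b_{τ(1)}} ⋯ z_{a_{σ(m)}} z_{b_{τ(m)}} ш z_{c₁} ш ⋯ ш z_{c_n}`. -/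
noncomputable def zTuple {m n : ℕ} (a b : Fin m → ℕ+) (c : Fin n → ℕ+) : H1 :=
  ∑ σ : Equiv.Perm (Fin m), ∑ τ : Equiv.Perm (Fin m),
    (List.ofFn c).foldl (fun w k => shuffle w (word [k]))
      (word ((List.ofFn (fun i => [a (σ i), b (τ i)])).flatten))

/-- The statement `P_{m,n}`: `Z_𝒜(z_a) = Z̄_𝒜(z_a) = 0` for all `a ∈ I_{m,n}`. -/
def Pmn (m n : ℕ) : Prop :=
  ∀ (a b : Fin m → ℕ+) (c : Fin n → ℕ+),
    (∀ i, Odd (a i : ℕ)) → (∀ i, Odd (b i : ℕ)) → (∀ j, Even (c j : ℕ)) →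
    ZA (zTuple a b c) = 0 ∧ ZSA (zTuple a b c) = 0

/-- The list `{c}^{n₀}, a, {c}^{n₁}, b, {c}^{n₂}, …, a, {c}^{n_{2m-1}}, b, {c}^{n_{2m}}`. -/
def bbList (a b c : ℕ) (m : ℕ) (f : Fin (2 * m + 1) → ℕ) : List ℕ :=
  (List.ofFn (fun j : Fin m =>
      List.replicate (f ⟨2 * j.val, by have := j.isLt; omega⟩) c ++ [a]
        ++ List.replicate (f ⟨2 * j.val + 1, by have := j.isLt; omega⟩) c ++ [b])).flatten
    ++ List.replicate (f ⟨2 * m, by omega⟩) c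

open scoped Classical

def repl : List ℕ+ → ℕ → ℕ+ → List ℕ+
  | [], _, _ => []
  | b :: t, 0, a => (b + a) :: t
  | b :: t, i+1, a => b :: repl t i a

lemma word_mul (u v : List ℕ+) : word u * word v = word (u ++ v) := by
  unfold word
  rw [← map_mul]
  rfl

lemma word_cons (c : ℕ+) (u : List ℕ+) : word (c :: u) = word [c] * word u := by
  rw [word_mul]; rfl

example (v : List ℕ+) : shuffleW v [] = word v := by
  cases v <;> simp [shuffleW]

example (k l : ℕ+) (v w : List ℕ+) :
    shuffleW (k :: v) (l :: w) = word [k] * shuffleW v (l :: w) + word [l] * shuffleW (k :: v) w := by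
  simp [shuffleW]

example (k l : ℕ+) (v w : List ℕ+) :
    harmW (k :: v) (l :: w) = word [k] * harmW v (l :: w) + word [l] * harmW (k :: v) w + word [k+l] * harmW v w := by
  simp [harmW]
lemma shuffleW_nil_right (v : List ℕ+) : shuffleW v [] = word v := by
  cases v <;> simp [shuffleW]

lemma harmW_nil_right (v : List ℕ+) : harmW v [] = word v := by
  cases v <;> simp [harmW]

noncomputable def LinOf (f : FreeMonoid ℕ+ → H1) : H1 →ₗ[ℚ] H1 :=
  (Finsupp.lsum ℚ fun u => LinearMap.toSpanSingleton ℚ H1 (f u)) ∘ₗ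
    (MonoidAlgebra.coeffLinearEquiv ℚ).toLinearMap

lemma word_eq_single (u : List ℕ+) : word u = MonoidAlgebra.single (FreeMonoid.ofList u) (1:ℚ) := rfl

lemma LinOf_word (f : FreeMonoid ℕ+ → H1) (u : List ℕ+) :
    LinOf f (word u) = f (FreeMonoid.ofList u) := by
  show (Finsupp.lsum ℚ fun u => LinearMap.toSpanSingleton ℚ H1 (f u))
    (Finsupp.single (FreeMonoid.ofList u) (1:ℚ)) = _
  rw [Finsupp.lsum_single, LinearMap.toSpanSingleton_apply, one_smul]

noncomputable def shufL (a : ℕ+) : H1 →ₗ[ℚ] H1 :=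
  LinOf (fun u => shuffleW (FreeMonoid.toList u) [a])
noncomputable def harmL (a : ℕ+) : H1 →ₗ[ℚ] H1 :=
  LinOf (fun u => harmW (FreeMonoid.toList u) [a])
noncomputable def DL (a : ℕ+) : H1 →ₗ[ℚ] H1 :=
  LinOf (fun u => ∑ i ∈ Finset.range (FreeMonoid.toList u).length,
    word (repl (FreeMonoid.toList u) i a))

lemma shufL_word (a : ℕ+) (u : List ℕ+) : shufL a (word u) = shuffleW u [a] := by
  rw [shufL, LinOf_word, FreeMonoid.toList_ofList]
lemma harmL_word (a : ℕ+) (u : List ℕ+) : harmL a (word u) = harmW u [a] := by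
  rw [harmL, LinOf_word, FreeMonoid.toList_ofList]
lemma DL_word (a : ℕ+) (u : List ℕ+) :
    DL a (word u) = ∑ i ∈ Finset.range u.length, word (repl u i a) := by
  rw [DL, LinOf_word, FreeMonoid.toList_ofList]

lemma shuffle_word_right (x : H1) (a : ℕ+) : shuffle x (word [a]) = shufL a x := by
  show Finsupp.sum x.coeff _ = (Finsupp.lsum ℚ fun u => LinearMap.toSpanSingleton ℚ H1 _) x.coeff
  rw [Finsupp.lsum_apply]
  apply Finsupp.sum_congr
  intro v _
  rw [word_eq_single, MonoidAlgebra.coeff_single, Finsupp.sum_single_index (by simp), LinearMap.toSpanSingleton_apply,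
    FreeMonoid.toList_ofList, mul_one]

lemma harm_word_right (x : H1) (a : ℕ+) : harm x (word [a]) = harmL a x := by
  show Finsupp.sum x.coeff _ = (Finsupp.lsum ℚ fun u => LinearMap.toSpanSingleton ℚ H1 _) x.coeff
  rw [Finsupp.lsum_apply]
  apply Finsupp.sum_congr
  intro v _
  rw [word_eq_single, MonoidAlgebra.coeff_single, Finsupp.sum_single_index (by simp), LinearMap.toSpanSingleton_apply,
    FreeMonoid.toList_ofList, mul_one]

lemma linext {f g : H1 →ₗ[ℚ] H1} (h : ∀ u : List ℕ+, f (word u) = g (word u)) : f = g := by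
  have key : f ∘ₗ (MonoidAlgebra.coeffLinearEquiv ℚ).symm.toLinearMap
      = g ∘ₗ (MonoidAlgebra.coeffLinearEquiv ℚ).symm.toLinearMap := by
    refine Finsupp.lhom_ext fun u b => ?_
    have h1 : ((MonoidAlgebra.coeffLinearEquiv ℚ).symm (Finsupp.single u b) : H1)
        = b • word (FreeMonoid.toList u) := by
      rw [word_eq_single, FreeMonoid.ofList_toList, MonoidAlgebra.smul_single', mul_one]; rfl
    simp only [LinearMap.comp_apply, LinearEquiv.coe_coe]
    rw [h1, map_smul, map_smul]
    exact congrArg (b • ·) (h _)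
  exact LinearMap.ext fun x => LinearMap.congr_fun key x.coeff
lemma harmW_single (a : ℕ+) : ∀ u : List ℕ+,
    harmW u [a] = shuffleW u [a] + ∑ i ∈ Finset.range u.length, word (repl u i a)
  | [] => by simp [harmW, shuffleW]
  | c :: u => by
    have IH := harmW_single a u
    simp only [harmW, shuffleW, harmW_nil_right, shuffleW_nil_right, List.length_cons]
    rw [Finset.sum_range_succ', IH, mul_add, Finset.mul_sum]
    simp only [repl, ← word_cons]
    abel

lemma harmL_eq (a : ℕ+) : harmL a = shufL a + DL a := by
  refine linext fun u => ?_
  rw [harmL_word, LinearMap.add_apply, shufL_word, DL_word, harmW_single]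

lemma DL_mulLeft (a c : ℕ+) : DL a ∘ₗ LinearMap.mulLeft ℚ (word [c])
    = LinearMap.mulLeft ℚ (word [c+a]) + LinearMap.mulLeft ℚ (word [c]) ∘ₗ DL a := by
  refine linext fun u => ?_
  simp only [LinearMap.comp_apply, LinearMap.add_apply, LinearMap.mulLeft_apply]
  rw [← word_cons, DL_word, DL_word, List.length_cons, Finset.sum_range_succ',
    Finset.mul_sum]
  simp only [repl, ← word_cons]
  abel

lemma DL_mul (a c : ℕ+) (x : H1) :
    DL a (word [c] * x) = word [c+a] * x + word [c] * DL a x := by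
  have := LinearMap.congr_fun (DL_mulLeft a c) x
  simpa using this

lemma shufL_mulLeft (b c : ℕ+) : shufL b ∘ₗ LinearMap.mulLeft ℚ (word [c])
    = LinearMap.mulLeft ℚ (word [c]) ∘ₗ shufL b + LinearMap.mulLeft ℚ (word (b :: [c])) := by
  refine linext fun u => ?_
  simp only [LinearMap.comp_apply, LinearMap.add_apply, LinearMap.mulLeft_apply]
  rw [← word_cons, shufL_word, shufL_word]
  simp only [shuffleW, shuffleW_nil_right]
  simp [word_mul]

lemma shufL_mul (b c : ℕ+) (x : H1) :
    shufL b (word [c] * x) = word [c] * shufL b x + word [b] * (word [c] * x) := by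
  have := LinearMap.congr_fun (shufL_mulLeft b c) x
  simp only [LinearMap.comp_apply, LinearMap.add_apply, LinearMap.mulLeft_apply] at this
  rw [this, word_cons b, mul_assoc]

lemma shufL_word_nil (b : ℕ+) : shufL b (word []) = word [b] := by
  rw [shufL_word]; simp [shuffleW]

lemma DL_shufL_word (a b : ℕ+) : ∀ u : List ℕ+,
    DL a (shufL b (word u)) = shufL (b+a) (word u) + shufL b (DL a (word u))
  | [] => by
    have h0 : DL a (word ([] : List ℕ+)) = 0 := by rw [DL_word]; simp
    rw [shufL_word_nil, h0, map_zero, add_zero, shufL_word_nil, DL_word]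
    simp [repl]
  | c :: u => by
    have IH := DL_shufL_word a b u
    set W := word u with hW
    rw [word_cons, shufL_mul b c W, map_add, DL_mul a c (shufL b W), IH]
    have e1 : DL a (word [b] * (word [c] * W))
        = word [b+a] * (word [c] * W) + word [b] * (word [c+a] * W + word [c] * DL a W) := by
      rw [DL_mul, DL_mul]
    have e2 : shufL b (DL a (word [c] * W))
        = word [c+a] * shufL b W + word [b] * (word [c+a] * W)
          + (word [c] * shufL b (DL a W) + word [b] * (word [c] * DL a W)) := by
      rw [DL_mul, map_add, shufL_mul, shufL_mul]
    rw [e1, shufL_mul (b+a) c W, e2]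
    noncomm_ring

lemma DL_shufL (a b : ℕ+) (x : H1) :
    DL a (shufL b x) = shufL (b+a) x + shufL b (DL a x) := by
  have h : DL a ∘ₗ shufL b = shufL (b+a) + shufL b ∘ₗ DL a :=
    linext fun u => by simpa using DL_shufL_word a b u
  simpa using LinearMap.congr_fun h x

lemma shufL_comm_word (a b : ℕ+) : ∀ u : List ℕ+,
    shufL a (shufL b (word u)) = shufL b (shufL a (word u))
  | [] => by
    rw [shufL_word_nil, shufL_word_nil, shufL_word, shufL_word]
    simp only [shuffleW, shuffleW_nil_right]
    abel
  | c :: u => by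
    have IH := shufL_comm_word a b u
    set W := word u with hW
    have key : ∀ x y : ℕ+, shufL x (shufL y (word [c] * W)) =
        word [c] * shufL x (shufL y W) + word [x] * (word [c] * shufL y W)
        + (word [y] * (word [c] * shufL x W) + word [y] * (word [x] * (word [c] * W))
          + word [x] * (word [y] * (word [c] * W))) := by
      intro x y
      rw [shufL_mul y c W, map_add, shufL_mul x c (shufL y W),
        shufL_mul x y (word [c] * W), shufL_mul x c W]
      noncomm_ring
    rw [word_cons, key a b, key b a, IH]
    abel

lemma shufL_comm (a b : ℕ+) (x : H1) : shufL a (shufL b x) = shufL b (shufL a x) := by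
  have h : shufL a ∘ₗ shufL b = shufL b ∘ₗ shufL a :=
    linext fun u => by simpa using shufL_comm_word a b u
  simpa using LinearMap.congr_fun h x
noncomputable def Gl (l : List ℕ+) : H1 := l.foldl (fun w s => shuffle w (word [s])) (word [])

instance : RightCommutative (fun (w : H1) (s : ℕ+) => shuffle w (word [s])) := by
  constructor
  intro x a b
  simp only [shuffle_word_right]
  exact shufL_comm b a _

lemma Gl_perm {l l' : List ℕ+} (h : l.Perm l') : Gl l = Gl l' :=
  h.foldl_eq (word [])

noncomputable def GM (m : Multiset ℕ+) : H1 := Gl m.toList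

lemma GM_coe (l : List ℕ+) : GM ↑l = Gl l :=
  Gl_perm (by rw [← Multiset.coe_eq_coe, Multiset.coe_toList])

lemma Gl_append (l : List ℕ+) (a : ℕ+) : Gl (l ++ [a]) = shufL a (Gl l) := by
  rw [Gl, List.foldl_append]
  simp only [List.foldl_cons, List.foldl_nil]
  rw [shuffle_word_right]
  rfl

lemma repl_append_lt : ∀ (l : List ℕ+) (i : ℕ) (a b : ℕ+), i < l.length →
    repl (l ++ [b]) i a = repl l i a ++ [b]
  | [], i, _, _, h => by simp at h
  | c :: t, 0, a, b, _ => rfl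
  | c :: t, i+1, a, b, h => by
    simp only [List.cons_append, repl, List.length_cons, List.append_eq] at *
    rw [repl_append_lt t i a b (by omega)]

lemma repl_append_last : ∀ (l : List ℕ+) (a b : ℕ+),
    repl (l ++ [b]) l.length a = l ++ [b+a]
  | [], a, b => rfl
  | c :: t, a, b => by
    simp only [List.cons_append, repl, List.length_cons, List.append_eq]
    rw [repl_append_last t a b]

lemma DL_Gl (a : ℕ+) (l : List ℕ+) :
    DL a (Gl l) = ∑ i ∈ Finset.range l.length, Gl (repl l i a) := by
  induction l using List.reverseRecOn with
  | nil => simp [Gl, DL_word]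
  | append_singleton l b IH =>
    rw [Gl_append, DL_shufL, IH, map_sum, List.length_append, List.length_singleton,
      Finset.sum_range_succ, repl_append_last, Gl_append]
    have hc : ∑ i ∈ Finset.range l.length, Gl (repl (l ++ [b]) i a)
        = ∑ i ∈ Finset.range l.length, shufL b (Gl (repl l i a)) :=
      Finset.sum_congr rfl (fun i hi => by
        rw [repl_append_lt l i a b (Finset.mem_range.mp hi), Gl_append])
    rw [hc]
    exact add_comm _ _

lemma repl_coe : ∀ (l : List ℕ+) (i : ℕ) (a : ℕ+), i < l.length →
    (↑(repl l i a) : Multiset ℕ+) + {l.getD i 1} = ↑l + {l.getD i 1 + a}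
  | [], i, a, h => by simp at h
  | c :: t, 0, a, _ => by
    show ((c+a) ::ₘ ↑t) + {c} = (c ::ₘ ↑t) + {c + a}
    rw [add_comm _ ({c} : Multiset ℕ+), add_comm _ ({c+a} : Multiset ℕ+),
      Multiset.singleton_add, Multiset.singleton_add, Multiset.cons_swap]
  | c :: t, i+1, a, h => by
    have IH := repl_coe t i a (by simpa using h)
    show (c ::ₘ ↑(repl t i a)) + {t.getD i 1} = (c ::ₘ ↑t) + {t.getD i 1 + a}
    rw [Multiset.cons_add, Multiset.cons_add, IH]

lemma getD_mem {l : List ℕ+} {i : ℕ} (h : i < l.length) : l.getD i 1 ∈ l := by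
  rw [List.getD_eq_getElem l 1 h]
  exact List.getElem_mem h

lemma repl_coe' (l : List ℕ+) (i : ℕ) (a : ℕ+) (h : i < l.length) :
    (↑(repl l i a) : Multiset ℕ+) = (↑l : Multiset ℕ+).erase (l.getD i 1) + {l.getD i 1 + a} := by
  have hm : l.getD i 1 ∈ (↑l : Multiset ℕ+) := by simpa using getD_mem h
  have h1 := repl_coe l i a h
  have h2 : (↑l : Multiset ℕ+) = (↑l : Multiset ℕ+).erase (l.getD i 1) + {l.getD i 1} := by
    rw [add_comm, Multiset.singleton_add, Multiset.cons_erase hm]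
  rw [h2] at h1
  apply add_right_cancel (b := ({l.getD i 1} : Multiset ℕ+))
  rw [h1]
  rw [add_right_comm]

lemma listsum (g : ℕ+ → H1) : ∀ l : List ℕ+,
    (l.map g).sum = ∑ i ∈ Finset.range l.length, g (l.getD i 1)
  | [] => by simp
  | x :: t => by
    rw [List.map_cons, List.sum_cons, List.length_cons, Finset.sum_range_succ',
      listsum g t, add_comm]
    rfl

lemma harm_GM (m : Multiset ℕ+) (a : ℕ+) :
    harm (GM m) (word [a])
      = GM (m + {a}) + (Multiset.map (fun x => GM (m.erase x + {x + a})) m).sum := by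
  obtain ⟨l, rfl⟩ : ∃ l : List ℕ+, ↑l = m := ⟨m.toList, Multiset.coe_toList m⟩
  rw [GM_coe, harm_word_right, harmL_eq, LinearMap.add_apply, DL_Gl]
  congr 1
  · rw [show (↑l + {a} : Multiset ℕ+) = ↑(l ++ [a]) from rfl, GM_coe, Gl_append]
  · have hc : ∀ i ∈ Finset.range l.length, Gl (repl l i a)
        = (fun x => GM ((↑l : Multiset ℕ+).erase x + {x + a})) (l.getD i 1) := by
      intro i hi
      rw [← GM_coe, repl_coe' l i a (Finset.mem_range.mp hi)]
    rw [Finset.sum_congr rfl hc,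
      ← listsum (fun x => GM ((↑l : Multiset ℕ+).erase x + {x + a})) l]
    rw [show (Multiset.map (fun x => GM ((↑l:Multiset ℕ+).erase x + {x + a})) ↑l)
        = ↑(l.map (fun x => GM ((↑l:Multiset ℕ+).erase x + {x + a}))) from rfl]
    rw [Multiset.sum_coe]
lemma tpc (n : ℕ) (h : 0 < n) : (n.toPNat' : ℕ) = n := by
  cases n with
  | zero => omega
  | succ m => rfl

lemma toPNat'_pnat (a : ℕ+) : ((a : ℕ)).toPNat' = a :=
  PNat.coe_injective (tpc _ a.pos)

lemma toPNat'_add_pos {x y : ℕ} (hx : 0 < x) (hy : 0 < y) :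
    (x + y).toPNat' = x.toPNat' + y.toPNat' :=
  PNat.coe_injective (by rw [tpc _ (by omega), PNat.add_coe, tpc _ hx, tpc _ hy])

lemma GM_zero : GM 0 = word [] := by
  rw [GM, Multiset.toList_zero]; rfl

section UpDown

variable {n : ℕ}

noncomputable def down (P : Finset (Fin (n+1))) : Finset (Fin n) :=
  P.preimage Fin.castSucc (Fin.castSucc_injective n).injOn

lemma mem_down {P : Finset (Fin (n+1))} {y : Fin n} : y ∈ down P ↔ y.castSucc ∈ P :=
  Finset.mem_preimage

def upE : Finset (Fin n) ↪ Finset (Fin (n+1)) := (Finset.mapEmbedding Fin.castSuccEmb).toEmbedding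

lemma mem_upE {B : Finset (Fin n)} {x : Fin (n+1)} :
    x ∈ upE B ↔ ∃ y ∈ B, y.castSucc = x := by
  rw [upE, RelEmbedding.coe_toEmbedding, Finset.mapEmbedding_apply, Finset.mem_map]
  rfl

lemma castSucc_mem_upE {B : Finset (Fin n)} {y : Fin n} : y.castSucc ∈ upE B ↔ y ∈ B := by
  rw [mem_upE]
  constructor
  · rintro ⟨z, hz, hzy⟩
    rwa [← Fin.castSucc_injective n hzy]
  · exact fun h => ⟨y, h, rfl⟩

lemma last_not_mem_upE {B : Finset (Fin n)} : Fin.last n ∉ upE B := by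
  rw [mem_upE]
  rintro ⟨y, _, hy⟩
  exact (Fin.castSucc_lt_last y).ne hy

lemma down_upE (B : Finset (Fin n)) : down (upE B) = B := by
  ext y; rw [mem_down, castSucc_mem_upE]

noncomputable def special (B : Finset (Fin n)) : Finset (Fin (n+1)) :=
  insert (Fin.last n) (upE B)

lemma last_mem_special {B : Finset (Fin n)} : Fin.last n ∈ special B :=
  Finset.mem_insert_self _ _

lemma castSucc_mem_special {B : Finset (Fin n)} {y : Fin n} :
    y.castSucc ∈ special B ↔ y ∈ B := by
  rw [special, Finset.mem_insert, castSucc_mem_upE]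
  simp [(Fin.castSucc_lt_last y).ne]

lemma down_special (B : Finset (Fin n)) : down (special B) = B := by
  ext y; rw [mem_down, castSucc_mem_special]

lemma special_down {P : Finset (Fin (n+1))} (h : Fin.last n ∈ P) : special (down P) = P := by
  ext x
  rcases eq_or_ne x (Fin.last n) with rfl | hx
  · simp [h, last_mem_special]
  · obtain ⟨y, rfl⟩ := Fin.exists_castSucc_eq.mpr hx
    rw [castSucc_mem_special, mem_down]

lemma upE_down {P : Finset (Fin (n+1))} (h : Fin.last n ∉ P) : upE (down P) = P := by
  ext x
  rcases eq_or_ne x (Fin.last n) with rfl | hx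
  · simp [h, last_not_mem_upE]
  · obtain ⟨y, rfl⟩ := Fin.exists_castSucc_eq.mpr hx
    rw [castSucc_mem_upE, mem_down]

lemma special_nonempty (B : Finset (Fin n)) : (special B).Nonempty :=
  ⟨Fin.last n, last_mem_special⟩

lemma special_not_mem_map {S : Finset (Finset (Fin n))} :
    special B ∉ S.map upE := by
  rw [Finset.mem_map]
  rintro ⟨P₁, _, hP₁⟩
  exact last_not_mem_upE (hP₁ ▸ last_mem_special)

end UpDown
lemma upE_apply {n : ℕ} (B : Finset (Fin n)) : upE B = B.map Fin.castSuccEmb := by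
  rw [upE, RelEmbedding.coe_toEmbedding, Finset.mapEmbedding_apply]

lemma map_erase_mem {α β : Type*} [DecidableEq α] [DecidableEq β] (f : α → β)
    (s : Multiset α) (B : α) (h : B ∈ s) :
    (s.map f).erase (f B) = (s.erase B).map f := by
  conv_lhs => rw [← Multiset.cons_erase h]
  rw [Multiset.map_cons, Multiset.erase_cons_head]

section Bij

variable {n : ℕ}

noncomputable def phi (Q₀ : Finset (Finset (Fin n))) (B : Finset (Fin n)) :
    Finset (Finset (Fin (n+1))) :=
  insert (special B) ((Q₀.erase B).map upE)

lemma phi_mem {Q₀ : Finset (Finset (Fin n))} {B : Finset (Fin n)}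
    (h1 : ∀ P ∈ Q₀, P.Nonempty) (h2 : ∀ x, ∃! P, P ∈ Q₀ ∧ x ∈ P)
    (hB : B ∈ insert ∅ Q₀) :
    (∀ P ∈ phi Q₀ B, P.Nonempty) ∧ ∀ x, ∃! P, P ∈ phi Q₀ B ∧ x ∈ P := by
  constructor
  · intro P hP
    rcases Finset.mem_insert.mp hP with rfl | hP
    · exact special_nonempty B
    · obtain ⟨P₁, hP₁, rfl⟩ := Finset.mem_map.mp hP
      exact Finset.map_nonempty.mpr (h1 P₁ (Finset.mem_of_mem_erase hP₁))
  · intro x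
    induction x using Fin.lastCases with
    | last =>
      refine ⟨special B, ⟨Finset.mem_insert_self _ _, last_mem_special⟩, ?_⟩
      rintro P ⟨hP, hlast⟩
      rcases Finset.mem_insert.mp hP with rfl | hP
      · rfl
      · obtain ⟨P₁, _, rfl⟩ := Finset.mem_map.mp hP
        exact absurd hlast last_not_mem_upE
    | cast y =>
      by_cases hyB : y ∈ B
      · have hBQ : B ∈ Q₀ := by
          rcases Finset.mem_insert.mp hB with rfl | h
          · exact absurd hyB (Finset.notMem_empty y)
          · exact h
        refine ⟨special B, ⟨Finset.mem_insert_self _ _, castSucc_mem_special.mpr hyB⟩, ?_⟩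
        rintro P ⟨hP, hy⟩
        rcases Finset.mem_insert.mp hP with rfl | hP
        · rfl
        · obtain ⟨P₁, hP₁, rfl⟩ := Finset.mem_map.mp hP
          have hyP₁ : y ∈ P₁ := castSucc_mem_upE.mp hy
          have hPB : P₁ = B :=
            (h2 y).unique ⟨Finset.mem_of_mem_erase hP₁, hyP₁⟩ ⟨hBQ, hyB⟩
          exact absurd hPB (Finset.ne_of_mem_erase hP₁)
      · obtain ⟨P₀, ⟨hP₀Q, hyP₀⟩, hu⟩ := h2 y
        have hP₀B : P₀ ≠ B := fun h => hyB (h ▸ hyP₀)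
        refine ⟨upE P₀, ⟨Finset.mem_insert_of_mem
          (Finset.mem_map_of_mem _ (Finset.mem_erase.mpr ⟨hP₀B, hP₀Q⟩)),
          castSucc_mem_upE.mpr hyP₀⟩, ?_⟩
        rintro P ⟨hP, hy⟩
        rcases Finset.mem_insert.mp hP with rfl | hP
        · exact absurd (castSucc_mem_special.mp hy) hyB
        · obtain ⟨P₁, hP₁, rfl⟩ := Finset.mem_map.mp hP
          rw [hu P₁ ⟨Finset.mem_of_mem_erase hP₁, castSucc_mem_upE.mp hy⟩]

lemma psi1_mem {Q : Finset (Finset (Fin (n+1)))}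
    (h1 : ∀ P ∈ Q, P.Nonempty) (h2 : ∀ x, ∃! P, P ∈ Q ∧ x ∈ P) :
    (∀ P ∈ (Q.image down).erase ∅, P.Nonempty) ∧
      (∀ y, ∃! P, P ∈ (Q.image down).erase ∅ ∧ y ∈ P) := by
  constructor
  · intro P hP
    exact Finset.nonempty_iff_ne_empty.mpr (Finset.ne_of_mem_erase hP)
  · intro y
    obtain ⟨P, ⟨hPQ, hyP⟩, hu⟩ := h2 y.castSucc
    have hyd : y ∈ down P := mem_down.mpr hyP
    refine ⟨down P, ⟨Finset.mem_erase.mpr ⟨Finset.ne_empty_of_mem hyd,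
      Finset.mem_image_of_mem down hPQ⟩, hyd⟩, ?_⟩
    rintro P' ⟨hP', hyP'⟩
    obtain ⟨P₁, hP₁Q, rfl⟩ := Finset.mem_image.mp (Finset.mem_of_mem_erase hP')
    rw [hu P₁ ⟨hP₁Q, mem_down.mp hyP'⟩]

lemma psi1_phi {Q₀ : Finset (Finset (Fin n))} {B : Finset (Fin n)}
    (h1 : ∀ P ∈ Q₀, P.Nonempty) (hB : B ∈ insert ∅ Q₀) :
    ((phi Q₀ B).image down).erase ∅ = Q₀ := by
  have hemp : (∅ : Finset (Fin n)) ∉ Q₀ := fun h =>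
    Finset.not_nonempty_empty (h1 ∅ h)
  rw [phi, Finset.image_insert, down_special]
  have himg : ((Q₀.erase B).map upE).image down = Q₀.erase B := by
    rw [Finset.map_eq_image, Finset.image_image]
    exact (Finset.image_congr (fun P _ => down_upE P)).trans Finset.image_id
  rw [himg]
  rcases Finset.mem_insert.mp hB with rfl | hBQ
  · rw [Finset.erase_insert (Finset.notMem_erase _ _)]
    exact Finset.erase_eq_of_notMem hemp
  · rw [Finset.insert_erase hBQ]
    exact Finset.erase_eq_of_notMem hemp

lemma psi1_erase {Q : Finset (Finset (Fin (n+1)))}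
    (h1 : ∀ P ∈ Q, P.Nonempty) (h2 : ∀ x, ∃! P, P ∈ Q ∧ x ∈ P)
    {Bp : Finset (Fin (n+1))} (hBpQ : Bp ∈ Q) (hlast : Fin.last n ∈ Bp) :
    ((Q.image down).erase ∅).erase (down Bp) = (Q.erase Bp).image down := by
  ext P'
  simp only [Finset.mem_erase, Finset.mem_image]
  constructor
  · rintro ⟨hPB, hP0, P₁, hP₁Q, rfl⟩
    refine ⟨P₁, ⟨?_, hP₁Q⟩, rfl⟩
    rintro rfl; exact hPB rfl
  · rintro ⟨P₁, ⟨hne, hP₁Q⟩, rfl⟩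
    have hl : Fin.last n ∉ P₁ := fun hl =>
      hne ((h2 (Fin.last n)).unique ⟨hP₁Q, hl⟩ ⟨hBpQ, hlast⟩)
    obtain ⟨x, hx⟩ := h1 P₁ hP₁Q
    have hxl : x ≠ Fin.last n := fun h => hl (h ▸ hx)
    obtain ⟨y, rfl⟩ := Fin.exists_castSucc_eq.mpr hxl
    have hyd : y ∈ down P₁ := mem_down.mpr hx
    refine ⟨?_, Finset.ne_empty_of_mem hyd, P₁, hP₁Q, rfl⟩
    intro hEq
    have hyBp : y.castSucc ∈ Bp := mem_down.mp (hEq ▸ hyd)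
    exact hne ((h2 y.castSucc).unique ⟨hP₁Q, hx⟩ ⟨hBpQ, hyBp⟩)

lemma phi_psi {Q : Finset (Finset (Fin (n+1)))}
    (h1 : ∀ P ∈ Q, P.Nonempty) (h2 : ∀ x, ∃! P, P ∈ Q ∧ x ∈ P)
    {Bp : Finset (Fin (n+1))} (hBpQ : Bp ∈ Q) (hlast : Fin.last n ∈ Bp) :
    phi ((Q.image down).erase ∅) (down Bp) = Q := by
  rw [phi, special_down hlast, psi1_erase h1 h2 hBpQ hlast]
  have hmap : ((Q.erase Bp).image down).map upE = Q.erase Bp := by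
    rw [Finset.map_eq_image, Finset.image_image]
    have heq : ∀ P ∈ Q.erase Bp, upE (down P) = P := by
      intro P hP
      have hPQ : P ∈ Q := Finset.mem_of_mem_erase hP
      have hne : P ≠ Bp := Finset.ne_of_mem_erase hP
      have hl : Fin.last n ∉ P := fun hl =>
        hne ((h2 (Fin.last n)).unique ⟨hPQ, hl⟩ ⟨hBpQ, hlast⟩)
      exact upE_down hl
    exact (Finset.image_congr (fun P hP => heq P hP)).trans Finset.image_id
  rw [hmap, Finset.insert_erase hBpQ]

end Bij
lemma add_singleton_eq (m : Multiset ℕ+) (x : ℕ+) : m + {x} = x ::ₘ m := by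
  rw [add_comm, Multiset.singleton_add]

lemma main_sum (n : ℕ) : ∀ (k : Fin n → ℕ+),
    (List.ofFn k).foldl (fun w s => harm w (word [s])) (word [])
    = ∑ Q ∈ (Finset.univ : Finset (Finset (Finset (Fin n)))).filter
        (fun Q => (∀ P ∈ Q, P.Nonempty) ∧ ∀ x, ∃! P, P ∈ Q ∧ x ∈ P),
        GM (Q.val.map (fun A => (∑ i ∈ A, (k i : ℕ)).toPNat')) := by
  induction n with
  | zero =>
    intro k
    have hfilter : (Finset.univ : Finset (Finset (Finset (Fin 0)))).filter
        (fun Q => (∀ P ∈ Q, P.Nonempty) ∧ ∀ x, ∃! P, P ∈ Q ∧ x ∈ P) = {∅} := by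
      apply Finset.eq_singleton_iff_unique_mem.mpr
      constructor
      · rw [Finset.mem_filter]
        exact ⟨Finset.mem_univ _,
          fun P hP => absurd hP (Finset.notMem_empty P), fun x => x.elim0⟩
      · intro Q hQ
        rw [Finset.mem_filter] at hQ
        rw [Finset.eq_empty_iff_forall_notMem]
        intro P hP
        obtain ⟨x, -⟩ := hQ.2.1 P hP
        exact x.elim0
    rw [hfilter, Finset.sum_singleton]
    simp only [List.ofFn_zero, List.foldl_nil]
    rw [show ((∅ : Finset (Finset (Fin 0))).val.map
      (fun A => (∑ i ∈ A, ((k i : ℕ))).toPNat')) = 0 from rfl, GM_zero]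
  | succ n IH =>
    intro k
    rw [List.ofFn_succ', List.concat_eq_append, List.foldl_append, List.foldl_cons, List.foldl_nil, IH (fun i => k i.castSucc), harm_word_right,
      map_sum]
    have hstep : ∀ Q₀ ∈ (Finset.univ : Finset (Finset (Finset (Fin n)))).filter
        (fun Q => (∀ P ∈ Q, P.Nonempty) ∧ ∀ x, ∃! P, P ∈ Q ∧ x ∈ P),
        harmL (k (Fin.last n))
          (GM (Q₀.val.map (fun A => (∑ i ∈ A, ((k i.castSucc : ℕ))).toPNat')))
        = ∑ B ∈ insert ∅ Q₀,
            GM ((Q₀.val.erase B).map (fun A => (∑ i ∈ A, ((k i.castSucc : ℕ))).toPNat')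
              + {((∑ i ∈ B, ((k i.castSucc : ℕ))) + ((k (Fin.last n) : ℕ))).toPNat'}) := by
      intro Q₀ hQ₀
      obtain ⟨-, h1, h2⟩ := Finset.mem_filter.mp hQ₀
      have hemp : (∅ : Finset (Fin n)) ∉ Q₀ := fun h => Finset.not_nonempty_empty (h1 ∅ h)
      rw [← harm_word_right, harm_GM, Finset.sum_insert hemp]
      congr 1
      · have he : Multiset.erase Q₀.val ∅ = Q₀.val :=
          Multiset.erase_of_notMem (by simpa using hemp)
        rw [he, Finset.sum_empty, zero_add, toPNat'_pnat]
      · rw [Multiset.map_map]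
        apply congrArg Multiset.sum
        apply Multiset.map_congr rfl
        intro B hB
        have hBQ : B ∈ Q₀ := hB
        simp only [Function.comp_apply]
        rw [map_erase_mem _ _ B hB]
        have hpos : 0 < ∑ i ∈ B, ((k i.castSucc : ℕ)) :=
          Finset.sum_pos (fun i _ => (k i.castSucc).pos) (h1 B hBQ)
        rw [toPNat'_add_pos hpos (k (Fin.last n)).pos, toPNat'_pnat]
    rw [Finset.sum_congr rfl hstep, Finset.sum_sigma']
    refine Finset.sum_bij' (fun p _ => phi p.1 p.2)
      (fun Q hQ => ⟨(Q.image down).erase ∅,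
        down (Q.choose (fun P => Fin.last n ∈ P)
          ((Finset.mem_filter.mp hQ).2.2 (Fin.last n)))⟩)
      ?_ ?_ ?_ ?_ ?_
    · rintro ⟨Q₀, B⟩ hp
      rw [Finset.mem_sigma] at hp
      obtain ⟨hQ₀, hB⟩ := hp
      obtain ⟨-, h1, h2⟩ := Finset.mem_filter.mp hQ₀
      exact Finset.mem_filter.mpr ⟨Finset.mem_univ _, phi_mem h1 h2 hB⟩
    · intro Q hQ
      obtain ⟨-, h1, h2⟩ := Finset.mem_filter.mp hQ
      rw [Finset.mem_sigma]
      constructor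
      · exact Finset.mem_filter.mpr ⟨Finset.mem_univ _, psi1_mem h1 h2⟩
      · dsimp only
        by_cases h0 : down (Q.choose (fun P => Fin.last n ∈ P)
            ((Finset.mem_filter.mp hQ).2.2 (Fin.last n))) = ∅
        · rw [h0]; exact Finset.mem_insert_self _ _
        · exact Finset.mem_insert_of_mem (Finset.mem_erase.mpr ⟨h0,
            Finset.mem_image_of_mem down (Finset.choose_mem _ _ _)⟩)
    · rintro ⟨Q₀, B⟩ hp
      rw [Finset.mem_sigma] at hp
      obtain ⟨hQ₀, hB⟩ := hp
      obtain ⟨-, h1, h2⟩ := Finset.mem_filter.mp hQ₀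
      have hphi := phi_mem h1 h2 hB
      have hc1 : ∀ hex : ∃! P, P ∈ phi Q₀ B ∧ Fin.last n ∈ P,
          Finset.choose (fun P => Fin.last n ∈ P) (phi Q₀ B) hex = special B := fun hex =>
        hex.unique ⟨Finset.choose_mem (fun P => Fin.last n ∈ P) (phi Q₀ B) hex,
            Finset.choose_property (fun P => Fin.last n ∈ P) (phi Q₀ B) hex⟩
          ⟨Finset.mem_insert_self _ _, last_mem_special⟩
      dsimp only
      rw [hc1, down_special, psi1_phi h1 hB]
    · intro Q hQ
      obtain ⟨-, h1, h2⟩ := Finset.mem_filter.mp hQ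
      dsimp only
      exact phi_psi h1 h2
        (Finset.choose_mem (fun P => Fin.last n ∈ P) Q
          ((Finset.mem_filter.mp hQ).2.2 (Fin.last n)))
        (Finset.choose_property (fun P => Fin.last n ∈ P) Q
          ((Finset.mem_filter.mp hQ).2.2 (Fin.last n)))
    · rintro ⟨Q₀, B⟩ hp
      have hnm : special B ∉ (Q₀.erase B).map upE := special_not_mem_map
      dsimp only
      rw [phi, Finset.insert_val_of_notMem hnm, Finset.map_val, Finset.erase_val,
        Multiset.map_cons, Multiset.map_map]
      have hfe : ((fun A => (∑ i ∈ A, ((k i : ℕ))).toPNat') ∘ ⇑upE)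
          = (fun B' : Finset (Fin n) => (∑ i ∈ B', ((k i.castSucc : ℕ))).toPNat') := by
        funext P
        simp only [Function.comp_apply]
        congr 1
        rw [upE_apply, Finset.sum_map]
        rfl
      have hsp : (∑ i ∈ special B, ((k i : ℕ)))
          = (∑ i ∈ B, ((k i.castSucc : ℕ))) + ((k (Fin.last n) : ℕ)) := by
        rw [special, Finset.sum_insert last_not_mem_upE, upE_apply, Finset.sum_map, add_comm]
        rfl
      rw [hfe, hsp, add_singleton_eq]

/-- `z_{k₁} * ⋯ * z_{k_n} = ∑_Π ш_{A ∈ Π} z_{∑_{i∈A} k_i}`, the sum running over all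
partitions `Π` of `{1,…,n}` (modeled as families `Q` of pairwise disjoint nonempty
subsets of `Fin n` covering it); the shuffle over the blocks is taken over the block
sums listed in a canonical (sorted) order. -/
theorem harm_eq_sum_partitions_shuffle (n : ℕ) (hn : 1 ≤ n) (k : Fin n → ℕ+) :
    (List.ofFn k).foldl (fun w s => harm w (word [s])) (word [])
    = ∑ Q ∈ (Finset.univ : Finset (Finset (Finset (Fin n)))).filter
        (fun Q => (∀ P ∈ Q, P.Nonempty) ∧ ∀ x, ∃! P, P ∈ Q ∧ x ∈ P),
        (Multiset.sort (Q.val.map (fun A => ∑ i ∈ A, (k i : ℕ))) (· ≤ ·)).foldl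
          (fun w s => shuffle w (word [s.toPNat'])) (word []) := by
  rw [main_sum n k]
  apply Finset.sum_congr rfl
  intro Q hQ
  rw [← List.foldl_map (f := Nat.toPNat') (g := fun w t => shuffle w (word [t]))
    (l := Multiset.sort (Q.val.map (fun A => ∑ i ∈ A, ((k i : ℕ)))) (· ≤ ·)) (init := word [])]
  rw [show List.foldl (fun w t => shuffle w (word [t])) (word [])
      ((Multiset.sort (Q.val.map (fun A => ∑ i ∈ A, ((k i : ℕ)))) (· ≤ ·)).map Nat.toPNat')
      = Gl ((Multiset.sort (Q.val.map (fun A => ∑ i ∈ A, ((k i : ℕ)))) (· ≤ ·)).map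
        Nat.toPNat') from rfl]
  rw [← GM_coe]
  congr 1
  rw [show ((((Multiset.sort (Q.val.map (fun A => ∑ i ∈ A, ((k i : ℕ)))) (· ≤ ·)).map
      Nat.toPNat' : List ℕ+)) : Multiset ℕ+)
      = Multiset.map Nat.toPNat' ↑(Multiset.sort (Q.val.map (fun A => ∑ i ∈ A, ((k i : ℕ)))) (· ≤ ·)) from rfl]
  rw [Multiset.sort_eq, Multiset.map_map]
  rfl
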